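/- For indices i ∈ {1,…,D} and j ∈ {1,…,R}, the real function f(t) = ℓ evaluated with the entry V_{ij} of V replaced by t (keeping all other entries of A, V, μ fixed) is differentiable at t = V_{ij} and its derivative equals (Σ·V)_{ij} − r_i·(Vᵀ·r)_j, where Σ = Ω⁻¹ and r = y − μ. -/

import Mathlib

open Matrix

/-- Multivariate Gaussian log-likelihood in the low-rank precision parametrization
`Ω = A + V·Vᵀ` with `A = diagonal a`:
`ℓ = -(D/2)·log(2π) + (1/2)·log(det Ω) - (1/2)·(y-μ)ᵀ Ω (y-μ)`. -/
noncomputable def gaussLRLL (D R : ℕ) (y μ : Fin D → ℝ) (a : Fin D → ℝ)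
    (V : Matrix (Fin D) (Fin R) ℝ) : ℝ :=
  -((D : ℝ) / 2) * Real.log (2 * Real.pi)
    + (1 / 2) * Real.log (Matrix.diagonal a + V * V.transpose).det
    - (1 / 2) * ((y - μ) ⬝ᵥ (Matrix.diagonal a + V * V.transpose).mulVec (y - μ))

/-- The matrix `V` with its `(i,j)`-entry replaced by `t`. -/
def updEntryV {D R : ℕ} (V : Matrix (Fin D) (Fin R) ℝ) (i : Fin D) (j : Fin R) (t : ℝ) :
    Matrix (Fin D) (Fin R) ℝ :=
  Matrix.of fun k l => if k = i ∧ l = j then t else V k l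

lemma sum_det_updateColumn_eq {D : ℕ} (A B : Matrix (Fin D) (Fin D) ℝ) :
    Matrix.trace (A.adjugate * B)
      = ∑ p : Fin D, (A.updateCol p (fun k => B k p)).det := by
  unfold Matrix.trace
  refine Finset.sum_congr rfl fun p _ => ?_
  rw [← Matrix.cramer_apply, Matrix.cramer_eq_adjugate_mulVec]
  simp [Matrix.diag, Matrix.mul_apply, Matrix.mulVec, dotProduct]

lemma hasDerivAt_det_aux {D : ℕ} {M : ℝ → Matrix (Fin D) (Fin D) ℝ}
    {B : Matrix (Fin D) (Fin D) ℝ} {t₀ : ℝ}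
    (h : ∀ k l, HasDerivAt (fun t => M t k l) (B k l) t₀) :
    HasDerivAt (fun t => (M t).det) (Matrix.trace (Matrix.adjugate (M t₀) * B)) t₀ := by
  classical
  have key : (fun t => (M t).det)
      = fun t => ∑ σ : Equiv.Perm (Fin D),
          ((Equiv.Perm.sign σ : ℤ) : ℝ) * ∏ k, M t (σ k) k := by
    funext t
    simp [Matrix.det_apply, Units.smul_def, zsmul_eq_mul]
  rw [key]
  have hd : HasDerivAt (fun t => ∑ σ : Equiv.Perm (Fin D),
      ((Equiv.Perm.sign σ : ℤ) : ℝ) * ∏ k, M t (σ k) k)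
      (∑ σ : Equiv.Perm (Fin D), ((Equiv.Perm.sign σ : ℤ) : ℝ) *
        ∑ p, (∏ k ∈ Finset.univ.erase p, M t₀ (σ k) k) • B (σ p) p) t₀ := by
    apply HasDerivAt.fun_sum
    intro σ _
    exact (HasDerivAt.fun_finsetProd (fun k _ => h (σ k) k)).const_mul _
  convert hd using 1
  rw [sum_det_updateColumn_eq]
  have : ∀ p : Fin D, ((M t₀).updateCol p (fun k => B k p)).det
      = ∑ σ : Equiv.Perm (Fin D), ((Equiv.Perm.sign σ : ℤ) : ℝ) *
          (B (σ p) p * ∏ k ∈ Finset.univ.erase p, M t₀ (σ k) k) := by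
    intro p
    rw [Matrix.det_apply]
    refine Finset.sum_congr rfl fun σ _ => ?_
    rw [Units.smul_def, zsmul_eq_mul]
    congr 1
    rw [← Finset.mul_prod_erase Finset.univ _ (Finset.mem_univ p)]
    rw [Matrix.updateCol_self]
    congr 1
    refine Finset.prod_congr rfl fun k hk => ?_
    rw [Matrix.updateCol_apply, if_neg (Finset.mem_erase.mp hk).1]
  simp_rw [this]
  rw [Finset.sum_comm]
  refine Finset.sum_congr rfl fun σ _ => ?_
  rw [Finset.mul_sum]
  refine Finset.sum_congr rfl fun p _ => ?_
  simp [smul_eq_mul]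
  ring

/-- First partial derivative of the low-rank Gaussian log-likelihood with respect to the
entry `V_{ij}`: it equals `(Σ·V)_{ij} - r_i·(Vᵀ·r)_j` where `Σ = Ω⁻¹` and `r = y - μ`. -/
theorem gaussLR_deriv_V (D R : ℕ) (hD : 1 ≤ D) (y μ : Fin D → ℝ)
    (a : Fin D → ℝ) (ha : ∀ k, 0 < a k)
    (V : Matrix (Fin D) (Fin R) ℝ) (i : Fin D) (j : Fin R) :
    HasDerivAt (fun t : ℝ => gaussLRLL D R y μ a (updEntryV V i j t))
      (((Matrix.diagonal a + V * V.transpose)⁻¹ * V) i j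
        - (y i - μ i) * V.transpose.mulVec (y - μ) j)
      (V i j) := by
  classical
  set c := V i j with hc
  set E : Matrix (Fin D) (Fin R) ℝ :=
    Matrix.of (fun k l => if k = i ∧ l = j then (1:ℝ) else 0) with hE
  set Ω : Matrix (Fin D) (Fin D) ℝ := Matrix.diagonal a + V * V.transpose with hΩ
  set B : Matrix (Fin D) (Fin D) ℝ := E * V.transpose + V * E.transpose with hB
  set Cm : Matrix (Fin D) (Fin D) ℝ := E * E.transpose with hCm
  -- the updated matrix as an affine perturbation
  have hW : ∀ t : ℝ, updEntryV V i j t = V + (t - c) • E := by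
    intro t; ext k l
    simp only [updEntryV, Matrix.of_apply, Matrix.add_apply, Matrix.smul_apply, hE,
      smul_eq_mul]
    by_cases h : k = i ∧ l = j
    · obtain ⟨h1, h2⟩ := h; subst h1; subst h2
      rw [if_pos ⟨rfl, rfl⟩, if_pos ⟨rfl, rfl⟩, ← hc]; ring
    · rw [if_neg h, if_neg h]; ring
  have hM : ∀ t : ℝ,
      Matrix.diagonal a + updEntryV V i j t * (updEntryV V i j t).transpose
        = Ω + (t - c) • B + (t - c) ^ 2 • Cm := by
    intro t
    rw [hW t, hΩ, hB, hCm]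
    rw [Matrix.transpose_add, Matrix.transpose_smul]
    rw [Matrix.add_mul, Matrix.mul_add, Matrix.mul_add]
    rw [Matrix.smul_mul, Matrix.smul_mul, Matrix.mul_smul, Matrix.mul_smul]
    module
  have hMc : Matrix.diagonal a + updEntryV V i j c * (updEntryV V i j c).transpose = Ω := by
    rw [hM c]; simp
  -- entrywise derivatives
  have hEnt : ∀ k l, HasDerivAt
      (fun t => (Matrix.diagonal a + updEntryV V i j t * (updEntryV V i j t).transpose) k l)
      (B k l) c := by
    intro k l
    have hs : HasDerivAt (fun t : ℝ => t - c) 1 c := (hasDerivAt_id c).sub_const c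
    have ha1 : HasDerivAt (fun t : ℝ => (t - c) * B k l) (B k l) c := by
      simpa using hs.mul_const (B k l)
    have ha2 : HasDerivAt (fun t : ℝ => (t - c) ^ 2 * Cm k l) 0 c := by
      simpa using (hs.pow 2).mul_const (Cm k l)
    have h2 := (ha1.const_add (Ω k l)).fun_add ha2
    have hfun : (fun t => (Matrix.diagonal a
          + updEntryV V i j t * (updEntryV V i j t).transpose) k l)
        = fun t => Ω k l + (t - c) * B k l + (t - c) ^ 2 * Cm k l := by
      funext t; rw [hM t]
      simp [Matrix.add_apply, Matrix.smul_apply, smul_eq_mul]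
    rw [hfun]
    simpa using h2
  -- positive definiteness
  have hpsd : (V * V.transpose).PosSemidef := by
    have h := Matrix.posSemidef_self_mul_conjTranspose V
    have he : V.conjTranspose = V.transpose := by
      ext k l; simp [Matrix.conjTranspose_apply]
    rwa [he] at h
  have hpd : Ω.PosDef := (Matrix.posDef_diagonal_iff.mpr ha).add_posSemidef hpsd
  have hdetpos : 0 < Ω.det := hpd.det_pos
  -- symmetry of the inverse
  have hΩt : Ω.transpose = Ω := by
    rw [hΩ, Matrix.transpose_add, Matrix.transpose_mul, Matrix.transpose_transpose,
      Matrix.diagonal_transpose]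
  have hinvsym : ∀ k m, Ω⁻¹ k m = Ω⁻¹ m k := by
    intro k m
    have h : Ω⁻¹.transpose = Ω⁻¹ := by rw [Matrix.transpose_nonsing_inv, hΩt]
    have := congrFun (congrFun h k) m
    simpa [Matrix.transpose_apply] using this.symm
  -- entries of B
  have hBent : ∀ k l, B k l = (if k = i then V l j else 0) + (if l = i then V k j else 0) := by
    intro k l
    rw [hB]
    simp only [Matrix.add_apply, Matrix.mul_apply, Matrix.transpose_apply, hE,
      Matrix.of_apply]
    congr 1
    · by_cases hk : k = i
      · subst hk; simp
      · simp [hk]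
    · by_cases hl : l = i
      · subst hl; simp
      · simp [hl]
  -- trace identity
  have htr : Matrix.trace (Ω⁻¹ * B) = 2 * (Ω⁻¹ * V) i j := by
    have h1 : Matrix.trace (Ω⁻¹ * B) = ∑ k, ∑ m, Ω⁻¹ k m * B m k := by
      simp [Matrix.trace, Matrix.diag, Matrix.mul_apply]
    rw [h1]
    have h2 : ∀ k m : Fin D, Ω⁻¹ k m * B m k
        = (if m = i then Ω⁻¹ k m * V k j else 0)
          + (if k = i then Ω⁻¹ k m * V m j else 0) := by
      intro k m; rw [hBent]
      by_cases hm : m = i <;> by_cases hk : k = i <;> simp [hm, hk] <;> ring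
    simp_rw [h2, Finset.sum_add_distrib, Finset.sum_ite_eq', Finset.sum_ite_irrel,
      Finset.sum_const_zero, Finset.mem_univ, if_true]
    have h3 : ∑ k, Ω⁻¹ k i * V k j = ∑ k, Ω⁻¹ i k * V k j :=
      Finset.sum_congr rfl fun k _ => by rw [hinvsym k i]
    rw [h3]
    simp [Matrix.mul_apply]
    ring
  -- quadratic form of B
  have hrw : ∀ N : Matrix (Fin D) (Fin D) ℝ,
      (y - μ) ⬝ᵥ N.mulVec (y - μ) = ∑ k, ∑ l, (y - μ) k * (N k l * (y - μ) l) := by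
    intro N; simp [dotProduct, Matrix.mulVec, Finset.mul_sum]
  have hquadB : (y - μ) ⬝ᵥ B.mulVec (y - μ)
      = 2 * ((y i - μ i) * V.transpose.mulVec (y - μ) j) := by
    have h2 : ∀ k l : Fin D, (y - μ) k * (B k l * (y - μ) l)
        = (if k = i then (y - μ) k * (V l j * (y - μ) l) else 0)
          + (if l = i then (y - μ) k * (V k j * (y - μ) l) else 0) := by
      intro k l; rw [hBent]
      by_cases hk : k = i <;> by_cases hl : l = i <;> simp [hk, hl] <;> ring
    have hS : V.transpose.mulVec (y - μ) j = ∑ k, V k j * (y - μ) k := by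
      simp [Matrix.mulVec, dotProduct, Matrix.transpose_apply, mul_comm]
    have hA : (∑ k, ∑ l, if k = i then (y - μ) k * (V l j * (y - μ) l) else 0)
        = ∑ l, (y - μ) i * (V l j * (y - μ) l) := by
      rw [Finset.sum_eq_single i]
      · simp
      · intro b _ hb; simp [hb]
      · intro h; exact absurd (Finset.mem_univ i) h
    have hB2 : (∑ k, ∑ l, if l = i then (y - μ) k * (V k j * (y - μ) l) else 0)
        = ∑ k, (y - μ) k * (V k j * (y - μ) i) := by
      refine Finset.sum_congr rfl fun k _ => ?_
      simp
    have hsplit : (∑ k, ∑ l, (y - μ) k * (B k l * (y - μ) l))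
        = (∑ k, ∑ l, if k = i then (y - μ) k * (V l j * (y - μ) l) else 0)
          + (∑ k, ∑ l, if l = i then (y - μ) k * (V k j * (y - μ) l) else 0) := by
      rw [← Finset.sum_add_distrib]
      refine Finset.sum_congr rfl fun k _ => ?_
      rw [← Finset.sum_add_distrib]
      exact Finset.sum_congr rfl fun l _ => h2 k l
    rw [hrw B, hsplit, hA, hB2, hS]
    simp only [Finset.mul_sum]
    rw [← Finset.sum_add_distrib]
    refine Finset.sum_congr rfl fun x _ => ?_
    simp only [Pi.sub_apply]
    ring
  -- derivative of the determinant and its log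
  have hdet : HasDerivAt
      (fun t => (Matrix.diagonal a + updEntryV V i j t * (updEntryV V i j t).transpose).det)
      (Matrix.trace (Matrix.adjugate Ω * B)) c := by
    have h := hasDerivAt_det_aux (M := fun t =>
      Matrix.diagonal a + updEntryV V i j t * (updEntryV V i j t).transpose) (B := B)
      (t₀ := c) hEnt
    simpa only [hMc] using h
  have hdne : (Matrix.diagonal a + updEntryV V i j c * (updEntryV V i j c).transpose).det
      ≠ 0 := by rw [hMc]; exact ne_of_gt hdetpos
  have hlog := hdet.log hdne
  rw [hMc] at hlog
  -- derivative of the quadratic form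
  have hq : HasDerivAt
      (fun t => (y - μ) ⬝ᵥ (Matrix.diagonal a
        + updEntryV V i j t * (updEntryV V i j t).transpose).mulVec (y - μ))
      ((y - μ) ⬝ᵥ B.mulVec (y - μ)) c := by
    simp_rw [hrw]
    have hd : HasDerivAt (fun t => ∑ k, ∑ l, (y - μ) k *
        ((Matrix.diagonal a + updEntryV V i j t * (updEntryV V i j t).transpose) k l
          * (y - μ) l))
        (∑ k, ∑ l, (y - μ) k * (B k l * (y - μ) l)) c := by
      apply HasDerivAt.fun_sum; intro k _
      apply HasDerivAt.fun_sum; intro l _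
      exact ((hEnt k l).mul_const _).const_mul _
    exact hd
  -- assemble
  have final := ((hasDerivAt_const c (-((D : ℝ) / 2) * Real.log (2 * Real.pi))).fun_add
      (hlog.const_mul (1 / 2 : ℝ))).fun_sub (hq.const_mul (1 / 2 : ℝ))
  have hfeq : (fun t : ℝ => gaussLRLL D R y μ a (updEntryV V i j t))
      = fun t : ℝ => -((D : ℝ) / 2) * Real.log (2 * Real.pi)
          + 1 / 2 * Real.log (Matrix.diagonal a
              + updEntryV V i j t * (updEntryV V i j t).transpose).det
          - 1 / 2 * ((y - μ) ⬝ᵥ (Matrix.diagonal a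
              + updEntryV V i j t * (updEntryV V i j t).transpose).mulVec (y - μ)) := rfl
  rw [hfeq]
  refine final.congr_deriv ?_
  rw [hquadB]
  have hadj : Matrix.trace (Matrix.adjugate Ω * B) / Ω.det = Matrix.trace (Ω⁻¹ * B) := by
    rw [Matrix.inv_def, Ring.inverse_eq_inv, Matrix.smul_mul, Matrix.trace_smul,
      smul_eq_mul, div_eq_inv_mul]
  have hadj2 : Matrix.trace (Matrix.adjugate Ω * B) / Ω.det = 2 * (Ω⁻¹ * V) i j := by
    rw [hadj, htr]
  rw [hadj2]
  ring
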